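/- For each l = l₁l₂l₃ ∈ {0,1}³, the Bell operator Î_l = 2(−1)^{l₁}(A₀+A₁)⊗B₁⊗C₁ + (−1)^{l₁+l₂}(A₀−A₁)⊗B₀⊗1 + (−1)^{l₁+l₃}(A₀−A₁)⊗1⊗C₀, where A₀,A₁,B₀,B₁,C₀,C₁ are arbitrary Hermitian operators squaring to the identity on finite-dimensional Hilbert spaces H_A, H_B, H_C, satisfies Î_l ≤ 4√2 · 1. -/

import Mathlib

open Matrix
open scoped ComplexOrder Kronecker

noncomputable section

private lemma sub_kron' {l m n p : Type*} (A B : Matrix l m ℂ) (C : Matrix n p ℂ) :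
    (A - B) ⊗ₖ C = A ⊗ₖ C - B ⊗ₖ C := by
  ext ⟨i,j⟩ ⟨k,l⟩
  simp [kroneckerMap_apply, sub_mul]

private lemma kron_sub' {l m n p : Type*} (A : Matrix l m ℂ) (B C : Matrix n p ℂ) :
    A ⊗ₖ (B - C) = A ⊗ₖ B - A ⊗ₖ C := by
  ext ⟨i,j⟩ ⟨k,l⟩
  simp [kroneckerMap_apply, mul_sub]

private lemma kron_conjT' {m n : Type*} (A : Matrix m m ℂ) (B : Matrix n n ℂ) :
    (A ⊗ₖ B)ᴴ = Aᴴ ⊗ₖ Bᴴ := by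
  ext ⟨i,j⟩ ⟨k,l⟩
  simp [conjTranspose_apply, kroneckerMap_apply, star_mul']

private lemma psd_smul' {n : Type*} [Fintype n] {M : Matrix n n ℂ} (hM : M.PosSemidef)
    {c : ℝ} (hc : 0 ≤ c) : ((c : ℂ) • M).PosSemidef := by
  refine Matrix.PosSemidef.of_dotProduct_mulVec_nonneg ?_ ?_
  · show ((c : ℂ) • M)ᴴ = (c : ℂ) • M
    rw [conjTranspose_smul, hM.1.eq]
    congr 1
    simp [Complex.star_def, Complex.conj_ofReal]
  · intro x
    rw [smul_mulVec, dotProduct_smul, smul_eq_mul]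
    exact mul_nonneg (by exact_mod_cast hc) (hM.dotProduct_mulVec_nonneg x)

private lemma key' {nA nB nC : Type*}
    [Fintype nA] [Fintype nB] [Fintype nC]
    [DecidableEq nA] [DecidableEq nB] [DecidableEq nC]
    (A0 A1 : Matrix nA nA ℂ) (B0 B1 : Matrix nB nB ℂ) (C0 C1 : Matrix nC nC ℂ)
    (hA0sq : A0 * A0 = 1) (hA1sq : A1 * A1 = 1)
    (hB0sq : B0 * B0 = 1) (hB1sq : B1 * B1 = 1)
    (hC0sq : C0 * C0 = 1) (hC1sq : C1 * C1 = 1)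
    (s1 s2 s3 t : ℂ) :
    (t • 1 - A0 ⊗ₖ ((2*s1) • (B1 ⊗ₖ C1) + s2 • (B0 ⊗ₖ (1 : Matrix nC nC ℂ))
        + s3 • ((1 : Matrix nB nB ℂ) ⊗ₖ C0)))
      * (t • 1 - A0 ⊗ₖ ((2*s1) • (B1 ⊗ₖ C1) + s2 • (B0 ⊗ₖ (1 : Matrix nC nC ℂ))
        + s3 • ((1 : Matrix nB nB ℂ) ⊗ₖ C0)))
    + (t • 1 - A1 ⊗ₖ ((2*s1) • (B1 ⊗ₖ C1) - s2 • (B0 ⊗ₖ (1 : Matrix nC nC ℂ))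
        - s3 • ((1 : Matrix nB nB ℂ) ⊗ₖ C0)))
      * (t • 1 - A1 ⊗ₖ ((2*s1) • (B1 ⊗ₖ C1) - s2 • (B0 ⊗ₖ (1 : Matrix nC nC ℂ))
        - s3 • ((1 : Matrix nB nB ℂ) ⊗ₖ C0)))
    + (2:ℂ) • (((1 : Matrix (nA × nB × nC) (nA × nB × nC) ℂ)
        - (s2*s3) • ((1 : Matrix nA nA ℂ) ⊗ₖ (B0 ⊗ₖ C0)))
      * ((1 : Matrix (nA × nB × nC) (nA × nB × nC) ℂ)
        - (s2*s3) • ((1 : Matrix nA nA ℂ) ⊗ₖ (B0 ⊗ₖ C0))))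
    = (2*(t*t) + 8*(s1*s1) + 2*(s2*s2) + 2*(s3*s3) + 2 + 2*(s2*s2)*(s3*s3)) • 1
      - (2*t) • ((2 * s1) • ((A0 + A1) ⊗ₖ (B1 ⊗ₖ C1))
          + s2 • ((A0 - A1) ⊗ₖ (B0 ⊗ₖ (1 : Matrix nC nC ℂ)))
          + s3 • ((A0 - A1) ⊗ₖ ((1 : Matrix nB nB ℂ) ⊗ₖ C0))) := by
  simp only [mul_sub, sub_mul, mul_add, add_mul, smul_mul_assoc, mul_smul_comm,
    ← Matrix.mul_kronecker_mul, Matrix.one_mul, Matrix.mul_one, one_mul, mul_one,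
    Matrix.add_kronecker, Matrix.kronecker_add, sub_kron', kron_sub',
    Matrix.smul_kronecker, Matrix.kronecker_smul, Matrix.one_kronecker_one,
    hA0sq, hA1sq, hB0sq, hB1sq, hC0sq, hC1sq, smul_smul]
  match_scalars <;> ring1

/-- For Hermitian observables squaring to the identity, the Bell operator
`Î_l = 2(−1)^{l₁}(A₀+A₁)⊗B₁⊗C₁ + (−1)^{l₁+l₂}(A₀−A₁)⊗B₀⊗1 + (−1)^{l₁+l₃}(A₀−A₁)⊗1⊗C₀`
satisfies `Î_l ≤ 4√2·1`. -/
theorem stmt_7 {nA nB nC : Type*}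
    [Fintype nA] [Fintype nB] [Fintype nC]
    [DecidableEq nA] [DecidableEq nB] [DecidableEq nC]
    (A0 A1 : Matrix nA nA ℂ) (B0 B1 : Matrix nB nB ℂ) (C0 C1 : Matrix nC nC ℂ)
    (hA0 : A0.IsHermitian) (hA1 : A1.IsHermitian)
    (hB0 : B0.IsHermitian) (hB1 : B1.IsHermitian)
    (hC0 : C0.IsHermitian) (hC1 : C1.IsHermitian)
    (hA0sq : A0 * A0 = 1) (hA1sq : A1 * A1 = 1)
    (hB0sq : B0 * B0 = 1) (hB1sq : B1 * B1 = 1)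
    (hC0sq : C0 * C0 = 1) (hC1sq : C1 * C1 = 1)
    (l1 l2 l3 : Fin 2) :
    (((4 * Real.sqrt 2 : ℝ) : ℂ) • (1 : Matrix (nA × nB × nC) (nA × nB × nC) ℂ)
      - ((2 * (-1 : ℂ) ^ (l1 : ℕ)) • ((A0 + A1) ⊗ₖ (B1 ⊗ₖ C1))
          + ((-1 : ℂ) ^ ((l1 : ℕ) + (l2 : ℕ))) • ((A0 - A1) ⊗ₖ (B0 ⊗ₖ (1 : Matrix nC nC ℂ)))
          + ((-1 : ℂ) ^ ((l1 : ℕ) + (l3 : ℕ))) • ((A0 - A1) ⊗ₖ ((1 : Matrix nB nB ℂ) ⊗ₖ C0)))).PosSemidef := by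
  have hsq2 : Real.sqrt 2 * Real.sqrt 2 = 2 := Real.mul_self_sqrt (by norm_num)
  have hsq2pos : 0 < Real.sqrt 2 := Real.sqrt_pos.mpr (by norm_num)
  set s1 : ℂ := (-1 : ℂ) ^ (l1 : ℕ) with hs1def
  set s2 : ℂ := (-1 : ℂ) ^ ((l1 : ℕ) + (l2 : ℕ)) with hs2def
  set s3 : ℂ := (-1 : ℂ) ^ ((l1 : ℕ) + (l3 : ℕ)) with hs3def
  have hsgen : ∀ k : ℕ, ((-1 : ℂ) ^ k) * ((-1 : ℂ) ^ k) = 1 := fun k => by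
    rw [← pow_add]
    exact Even.neg_one_pow ⟨k, rfl⟩
  have hstar : ∀ k : ℕ, star ((-1 : ℂ) ^ k) = (-1 : ℂ) ^ k := fun k => by
    simp [star_pow]
  have hs1 : s1 * s1 = 1 := hsgen _
  have hs2 : s2 * s2 = 1 := hsgen _
  have hs3 : s3 * s3 = 1 := hsgen _
  set t : ℂ := ((2 * Real.sqrt 2 : ℝ) : ℂ) with htdef
  have ht : t * t = 8 := by
    rw [htdef, ← Complex.ofReal_mul]
    norm_num [mul_mul_mul_comm, hsq2]
  -- the three Hermitian squares
  set X : Matrix (nB × nC) (nB × nC) ℂ :=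
    (2*s1) • (B1 ⊗ₖ C1) + s2 • (B0 ⊗ₖ (1 : Matrix nC nC ℂ))
      + s3 • ((1 : Matrix nB nB ℂ) ⊗ₖ C0) with hXdef
  set Y : Matrix (nB × nC) (nB × nC) ℂ :=
    (2*s1) • (B1 ⊗ₖ C1) - s2 • (B0 ⊗ₖ (1 : Matrix nC nC ℂ))
      - s3 • ((1 : Matrix nB nB ℂ) ⊗ₖ C0) with hYdef
  set H0 : Matrix (nA × nB × nC) (nA × nB × nC) ℂ := t • 1 - A0 ⊗ₖ X with hH0def
  set H1 : Matrix (nA × nB × nC) (nA × nB × nC) ℂ := t • 1 - A1 ⊗ₖ Y with hH1def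
  set H2 : Matrix (nA × nB × nC) (nA × nB × nC) ℂ :=
    (1 : Matrix (nA × nB × nC) (nA × nB × nC) ℂ)
      - (s2*s3) • ((1 : Matrix nA nA ℂ) ⊗ₖ (B0 ⊗ₖ C0)) with hH2def
  have hstar_t : star t = t := by
    rw [htdef]; simp [Complex.star_def, Complex.conj_ofReal]
  have hH0herm : H0ᴴ = H0 := by
    rw [hH0def, hXdef]
    simp only [conjTranspose_sub, conjTranspose_smul, conjTranspose_one, conjTranspose_add,
      kron_conjT', hA0.eq, hB0.eq, hB1.eq, hC0.eq, hC1.eq, conjTranspose_one,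
      hstar_t, hstar, star_mul', star_ofNat, hs1def, hs2def, hs3def]
  have hH1herm : H1ᴴ = H1 := by
    rw [hH1def, hYdef]
    simp only [conjTranspose_sub, conjTranspose_smul, conjTranspose_one, conjTranspose_add,
      kron_conjT', hA1.eq, hB0.eq, hB1.eq, hC0.eq, hC1.eq, conjTranspose_one,
      hstar_t, hstar, star_mul', star_ofNat, hs1def, hs2def, hs3def]
  have hH2herm : H2ᴴ = H2 := by
    rw [hH2def]
    simp only [conjTranspose_sub, conjTranspose_smul, conjTranspose_one,
      kron_conjT', hB0.eq, hC0.eq, conjTranspose_one, star_mul']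
    rw [hs2def, hs3def]
    simp [hstar, mul_comm]
  have p0 : (H0 * H0).PosSemidef := by
    have h := Matrix.posSemidef_conjTranspose_mul_self H0
    rwa [hH0herm] at h
  have p1 : (H1 * H1).PosSemidef := by
    have h := Matrix.posSemidef_conjTranspose_mul_self H1
    rwa [hH1herm] at h
  have p2 : ((2:ℂ) • (H2 * H2)).PosSemidef := by
    have h := Matrix.posSemidef_conjTranspose_mul_self H2
    rw [hH2herm] at h
    have := psd_smul' h (c := 2) (by norm_num)
    simpa using this
  have hkey := key' A0 A1 B0 B1 C0 C1 hA0sq hA1sq hB0sq hB1sq hC0sq hC1sq s1 s2 s3 t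
  rw [← hXdef, ← hYdef, ← hH0def, ← hH1def, ← hH2def] at hkey
  have hcoef : (2*(t*t) + 8*(s1*s1) + 2*(s2*s2) + 2*(s3*s3) + 2 + 2*(s2*s2)*(s3*s3)) = (32:ℂ) := by
    rw [hs1, hs2, hs3, ht]; ring
  rw [hcoef] at hkey
  -- the goal matrix equals c • (sum of squares)
  set c : ℝ := (4 * Real.sqrt 2)⁻¹ with hcdef
  have hcnonneg : (0:ℝ) ≤ c := by positivity
  have hc32 : (c : ℂ) * 32 = ((4 * Real.sqrt 2 : ℝ) : ℂ) := by
    rw [hcdef]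
    have : ((4 * Real.sqrt 2)⁻¹ : ℝ) * 32 = 4 * Real.sqrt 2 := by
      field_simp
      nlinarith [hsq2]
    calc ((((4 * Real.sqrt 2)⁻¹ : ℝ)) : ℂ) * 32
        = ((((4 * Real.sqrt 2)⁻¹ * 32 : ℝ)) : ℂ) := by push_cast; ring
      _ = ((4 * Real.sqrt 2 : ℝ) : ℂ) := by rw [this]
  have hc2t : (c : ℂ) * (2 * t) = 1 := by
    rw [hcdef, htdef]
    have : ((4 * Real.sqrt 2)⁻¹ : ℝ) * (2 * (2 * Real.sqrt 2)) = 1 := by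
      field_simp
      ring
    calc ((((4 * Real.sqrt 2)⁻¹ : ℝ)) : ℂ) * (2 * ((2 * Real.sqrt 2 : ℝ) : ℂ))
        = ((((4 * Real.sqrt 2)⁻¹ * (2 * (2 * Real.sqrt 2)) : ℝ)) : ℂ) := by push_cast; ring
      _ = 1 := by rw [this]; norm_num
  have hG : (((4 * Real.sqrt 2 : ℝ) : ℂ) • (1 : Matrix (nA × nB × nC) (nA × nB × nC) ℂ)
      - ((2 * s1) • ((A0 + A1) ⊗ₖ (B1 ⊗ₖ C1))
          + s2 • ((A0 - A1) ⊗ₖ (B0 ⊗ₖ (1 : Matrix nC nC ℂ)))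
          + s3 • ((A0 - A1) ⊗ₖ ((1 : Matrix nB nB ℂ) ⊗ₖ C0))))
      = (c : ℂ) • (H0 * H0 + H1 * H1 + (2:ℂ) • (H2 * H2)) := by
    rw [hkey, smul_sub, smul_smul, smul_smul, hc32, hc2t, one_smul]
  rw [show (2 * (-1 : ℂ) ^ (l1 : ℕ)) = 2 * s1 from rfl]
  rw [hG]
  exact psd_smul' ((p0.add p1).add p2) hcnonneg

end
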